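/- Let m ≥ 0 be an integer and x > 0 a real number. Then x·J_m(x)·J_{m+1}(i·x) + (i·x)·J_m(i·x)·J_{m+1}(x) = 0 if and only if I_m(x)·J_m'(x) − J_m(x)·I_m'(x) = 0. (Here i·x is the value √μ for μ = −x², so the left-hand side is the dispersion relation √λ·J_m(√λ)·J_{m+1}(√μ) + √μ·J_m(√μ)·J_{m+1}(√λ) = 0 evaluated at β = 0, where λ = x² and μ = −x².) -/

import Mathlib

open Complex

noncomputable section

/-- The Bessel function of the first kind of integer order m ≥ 0,
`J_m(z) = Σ_{k≥0} (−1)^k/(k!(k+m)!) (z/2)^{2k+m}`. -/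
def besselJ (m : ℕ) (z : ℂ) : ℂ :=
  ∑' k : ℕ, ((-1 : ℂ) ^ k / ((Nat.factorial k : ℂ) * (Nat.factorial (k + m) : ℂ)))
    * (z / 2) ^ (2 * k + m)

/-- The modified Bessel function of the first kind of integer order m ≥ 0,
`I_m(z) = Σ_{k≥0} 1/(k!(k+m)!) (z/2)^{2k+m}`. -/
def besselI (m : ℕ) (z : ℂ) : ℂ :=
  ∑' k : ℕ, (1 / ((Nat.factorial k : ℂ) * (Nat.factorial (k + m) : ℂ)))
    * (z / 2) ^ (2 * k + m)

namespace BesselAux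

/-- Generic coefficient: `σ^k / (k! (k+m)!)`. `σ = -1` gives `J`, `σ = 1` gives `I`. -/
def coef (σ : ℂ) (m k : ℕ) : ℂ := σ ^ k / ((Nat.factorial k : ℂ) * (Nat.factorial (k + m) : ℂ))

/-- Generic Bessel-type series. -/
def F (σ : ℂ) (m : ℕ) (z : ℂ) : ℂ := ∑' k : ℕ, coef σ m k * (z / 2) ^ (2 * k + m)

lemma norm_coef_le {σ : ℂ} (hσ : ‖σ‖ ≤ 1) (m k : ℕ) :
    ‖coef σ m k‖ ≤ 1 / (Nat.factorial k : ℝ) := by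
  have h1 : (0:ℝ) < (Nat.factorial k : ℝ) := by positivity
  have h2 : (1:ℝ) ≤ (Nat.factorial (k+m) : ℝ) := by
    exact_mod_cast Nat.one_le_iff_ne_zero.mpr (Nat.factorial_ne_zero _)
  have he : ‖coef σ m k‖ = ‖σ‖^k / ((Nat.factorial k : ℝ) * (Nat.factorial (k+m) : ℝ)) := by
    simp [coef]
  rw [he]
  have hnum : ‖σ‖^k ≤ 1 := pow_le_one₀ (norm_nonneg _) hσ
  have hden : (Nat.factorial k : ℝ) ≤ (Nat.factorial k : ℝ) * (Nat.factorial (k+m) : ℝ) :=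
    le_mul_of_one_le_right h1.le h2
  exact div_le_div₀ (by norm_num) hnum h1 hden

lemma norm_term_le {σ : ℂ} (hσ : ‖σ‖ ≤ 1) (m k : ℕ) (w : ℂ) :
    ‖coef σ m k * (w / 2) ^ (2 * k + m)‖
      ≤ ‖w/2‖^m * ((‖w/2‖^2)^k / (Nat.factorial k : ℝ)) := by
  rw [norm_mul, norm_pow]
  have h : ‖w/2‖ ^ (2*k+m) = ‖w/2‖^m * (‖w/2‖^2)^k := by
    rw [pow_add, ← pow_mul, mul_comm]
  rw [h]
  have hc := norm_coef_le hσ m k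
  have hp : (0:ℝ) ≤ ‖w/2‖^m * (‖w/2‖^2)^k := by positivity
  calc ‖coef σ m k‖ * (‖w/2‖^m * (‖w/2‖^2)^k)
      ≤ (1 / (Nat.factorial k : ℝ)) * (‖w/2‖^m * (‖w/2‖^2)^k) :=
        mul_le_mul_of_nonneg_right hc hp
    _ = ‖w/2‖^m * ((‖w/2‖^2)^k / (Nat.factorial k : ℝ)) := by ring

lemma summable_gen (a : ℕ → ℂ) (C r : ℝ)
    (ha : ∀ k, ‖a k‖ ≤ C * (r ^ k / (Nat.factorial k : ℝ))) : Summable a :=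
  Summable.of_norm_bounded ((Real.summable_pow_div_factorial r).mul_left C) ha

lemma summable_F {σ : ℂ} (hσ : ‖σ‖ ≤ 1) (m : ℕ) (z : ℂ) :
    Summable (fun k : ℕ => coef σ m k * (z / 2) ^ (2 * k + m)) :=
  summable_gen _ (‖z/2‖^m) (‖z/2‖^2) (fun k => norm_term_le hσ m k z)

lemma hasDerivAt_term (σ : ℂ) (m k : ℕ) (z : ℂ) :
    HasDerivAt (fun w => coef σ m k * (w / 2) ^ (2 * k + m))
      (coef σ m k * (((2*k+m : ℕ) : ℂ) * (z/2)^(2*k+m-1) * (1/2))) z := by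
  have h : HasDerivAt (fun w : ℂ => (w / 2) ^ (2*k+m))
      (((2*k+m : ℕ) : ℂ) * (z/2)^(2*k+m-1) * (1/2)) z := by
    have := ((hasDerivAt_id z).div_const 2).pow (2*k+m)
    simpa [Pi.pow_def] using this
  exact h.const_mul _

lemma hasDerivAt_F {σ : ℂ} (hσ : ‖σ‖ ≤ 1) (m : ℕ) (z : ℂ) :
    HasDerivAt (F σ m)
      (∑' k : ℕ, coef σ m k * (((2*k+m : ℕ) : ℂ) * (z/2)^(2*k+m-1) * (1/2))) z := by
  set R : ℝ := ‖z‖ + 1 with hR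
  have hz0 : (0:ℝ) ≤ ‖z‖ := norm_nonneg z
  have hR1 : (1:ℝ) ≤ R := by rw [hR]; linarith
  have hR0 : (0:ℝ) < R := by linarith
  have hball : z ∈ Metric.ball (0:ℂ) R := by
    simp only [Metric.mem_ball, dist_zero_right, hR]
    linarith
  clear_value R
  set u : ℕ → ℝ := fun k => (2*(m+1)*R^m) * ((2*R^2)^k / (Nat.factorial k : ℝ)) with hu
  have hus : Summable u := ((Real.summable_pow_div_factorial _).mul_left _)
  refine hasDerivAt_tsum_of_isPreconnected hus Metric.isOpen_ball
    (convex_ball _ _).isPreconnected (fun k y _ => hasDerivAt_term σ m k y)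
    (fun k y hy => ?_) hball (summable_F hσ m z) hball
  have hy' : ‖y/2‖ ≤ R := by
    have h1 : ‖y‖ < R := by simpa [dist_zero_right] using hy
    have : ‖y‖ / 2 ≤ R := by linarith
    simpa [norm_div] using this
  have hnc := norm_coef_le hσ m k
  have hpow : ‖y/2‖^(2*k+m-1) ≤ R^(2*k+m) := by
    calc ‖y/2‖^(2*k+m-1) ≤ R^(2*k+m-1) := pow_le_pow_left₀ (norm_nonneg _) hy' _
      _ ≤ R^(2*k+m) := pow_le_pow_right₀ hR1 (Nat.sub_le _ _)
  have hcoeff : ((2*k+m : ℕ) : ℝ) ≤ 2*(m+1)*2^k := by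
    have h2k : (k:ℝ) ≤ 2^k := by exact_mod_cast (Nat.lt_two_pow_self (n := k)).le
    have h1 : (1:ℝ) ≤ 2^k := one_le_pow₀ (by norm_num)
    push_cast
    nlinarith
  calc ‖coef σ m k * (((2*k+m:ℕ):ℂ) * (y/2)^(2*k+m-1) * (1/2))‖
      = ‖coef σ m k‖ * (((2*k+m:ℕ):ℝ) * ‖y/2‖^(2*k+m-1) * (1/2)) := by
        simp only [norm_mul, norm_pow, Complex.norm_natCast]
        norm_num
    _ ≤ (1/(Nat.factorial k : ℝ)) * ((2*(m+1)*2^k) * R^(2*k+m) * 1) := by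
        apply mul_le_mul hnc ?_ (by positivity) (by positivity)
        apply mul_le_mul ?_ (by norm_num) (by norm_num) (by positivity)
        exact mul_le_mul hcoeff hpow (by positivity) (by positivity)
    _ ≤ u k := by
        show _ ≤ (2*(m+1)*R^m) * ((2*R^2)^k / (Nat.factorial k : ℝ))
        apply le_of_eq
        rw [pow_add, mul_comm 2 k, pow_mul, mul_pow]
        ring

lemma deriv_F {σ : ℂ} (hσ : ‖σ‖ ≤ 1) (m : ℕ) {z : ℂ} (hz : z ≠ 0) :
    deriv (F σ m) z = (m / z) * F σ m z + σ * F σ (m+1) z := by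
  rw [(hasDerivAt_F hσ m z).deriv]
  set hfun : ℕ → ℂ := fun k => (k:ℂ) * coef σ m k * (z/2)^(2*k+m-1) with hh
  have hshift : ∀ j : ℕ, hfun (j+1) = σ * (coef σ (m+1) j * (z/2)^(2*j+(m+1))) := by
    intro j
    simp only [hh, coef]
    have e1 : 2*(j+1)+m-1 = 2*j+(m+1) := by omega
    have e2 : j+1+m = j+(m+1) := by omega
    rw [e1, e2, Nat.factorial_succ]
    have hj : ((j:ℂ)+1) ≠ 0 := Nat.cast_add_one_ne_zero j
    have hf1 : ((Nat.factorial j : ℂ)) ≠ 0 := by exact_mod_cast (Nat.factorial_ne_zero j)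
    have hf2 : ((Nat.factorial (j+(m+1)) : ℂ)) ≠ 0 := by
      exact_mod_cast (Nat.factorial_ne_zero _)
    push_cast
    field_simp
    ring
  have hhs : Summable hfun := by
    apply (summable_nat_add_iff 1).mp
    simp only [hshift]
    exact ((summable_F hσ (m+1) z).mul_left σ)
  have hgk : ∀ k : ℕ, coef σ m k * (((2*k+m : ℕ) : ℂ) * (z/2)^(2*k+m-1) * (1/2))
      = (m / z) * (coef σ m k * (z/2)^(2*k+m)) + hfun k := by
    intro k
    rcases Nat.eq_zero_or_pos (2*k+m) with h0 | hpos
    · have hk : k = 0 := by omega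
      have hm : m = 0 := by omega
      subst hk; subst hm
      simp [hh]
    · have hn : 2*k+m-1+1 = 2*k+m := Nat.succ_pred_eq_of_pos hpos
      have hpow : (z/2)^(2*k+m) = (z/2)^(2*k+m-1) * (z/2) := by
        conv_lhs => rw [← hn]
        rw [pow_succ]
      rw [hpow]
      simp only [hh]
      push_cast
      field_simp
      ring
  rw [tsum_congr hgk, Summable.tsum_add ((summable_F hσ m z).mul_left _) hhs,
    tsum_mul_left, Summable.tsum_eq_zero_add hhs]
  have h0 : hfun 0 = 0 := by simp [hh]
  rw [h0, zero_add, tsum_congr hshift, tsum_mul_left]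
  rfl

lemma F_I_mul (m : ℕ) (z : ℂ) : F (-1) m (I * z) = I^m * F 1 m z := by
  rw [F, F, ← tsum_mul_left]
  apply tsum_congr
  intro k
  have h1 : I * z / 2 = I * (z/2) := by ring
  rw [h1, mul_pow, pow_add, pow_mul, I_sq]
  simp only [coef, one_pow]
  have h2 : ((-1:ℂ))^k * (-1)^k = 1 := by rw [← mul_pow]; norm_num
  linear_combination (I ^ m * (z / 2) ^ (2*k+m) /
    ((Nat.factorial k : ℂ) * (Nat.factorial (k+m) : ℂ))) * h2

lemma besselJ_eq (m : ℕ) : besselJ m = F (-1) m := rfl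

lemma besselI_eq (m : ℕ) : besselI m = F 1 m := by
  funext z
  rw [besselI, F]
  exact tsum_congr fun k => by simp [coef]

end BesselAux

open BesselAux in
/-- At criticality (β = 0, λ = x², μ = −x²) the dispersion relation
`√λ J_m(√λ) J_{m+1}(√μ) + √μ J_m(√μ) J_{m+1}(√λ) = 0` is equivalent to the
cross-product equation `I_m(x)J_m'(x) − J_m(x)I_m'(x) = 0`. -/
theorem dispersion_relation_at_criticality (m : ℕ) (x : ℝ) (hx : 0 < x) :
    ((x : ℂ) * besselJ m (x : ℂ) * besselJ (m + 1) (Complex.I * (x : ℂ))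
        + (Complex.I * (x : ℂ)) * besselJ m (Complex.I * (x : ℂ)) * besselJ (m + 1) (x : ℂ) = 0)
      ↔ (besselI m (x : ℂ) * deriv (besselJ m) (x : ℂ)
          - besselJ m (x : ℂ) * deriv (besselI m) (x : ℂ) = 0) := by
  have hσJ : ‖(-1 : ℂ)‖ ≤ 1 := by norm_num
  have hσI : ‖(1 : ℂ)‖ ≤ 1 := by norm_num
  have hxne : (x : ℂ) ≠ 0 := by
    simp only [ne_eq, Complex.ofReal_eq_zero]
    exact hx.ne'
  have hdJ : deriv (besselJ m) (x : ℂ)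
      = ((m : ℂ) / x) * besselJ m x + (-1) * besselJ (m+1) x := by
    rw [besselJ_eq m, besselJ_eq (m+1)]
    exact deriv_F hσJ m hxne
  have hdI : deriv (besselI m) (x : ℂ)
      = ((m : ℂ) / x) * besselI m x + 1 * besselI (m+1) x := by
    rw [besselI_eq m, besselI_eq (m+1)]
    exact deriv_F hσI m hxne
  have hJm : besselJ m (Complex.I * x) = Complex.I ^ m * besselI m x := by
    rw [besselJ_eq m, besselI_eq m]; exact F_I_mul m x
  have hJm1 : besselJ (m+1) (Complex.I * x) = Complex.I ^ (m+1) * besselI (m+1) x := by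
    rw [besselJ_eq (m+1), besselI_eq (m+1)]; exact F_I_mul (m+1) x
  rw [hdJ, hdI, hJm, hJm1]
  set Jm := besselJ m (x : ℂ)
  set Jm1 := besselJ (m+1) (x : ℂ)
  set Im := besselI m (x : ℂ)
  set Im1 := besselI (m+1) (x : ℂ)
  have e1 : (x:ℂ) * Jm * (Complex.I ^ (m+1) * Im1)
      + Complex.I * x * (Complex.I ^ m * Im) * Jm1
      = (Complex.I ^ (m+1) * x) * (Jm * Im1 + Im * Jm1) := by ring
  have e2 : Im * (((m : ℂ) / x) * Jm + (-1) * Jm1) - Jm * (((m : ℂ) / x) * Im + 1 * Im1)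
      = -(Jm * Im1 + Im * Jm1) := by ring
  rw [e1, e2, neg_eq_zero, mul_eq_zero]
  have hne : ¬(Complex.I ^ (m+1) * (x : ℂ) = 0) := by
    exact mul_ne_zero (pow_ne_zero _ Complex.I_ne_zero) hxne
  exact or_iff_right hne
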